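/- Let n = 2m and let g be a Boolean function on F_{2^n} of algebraic degree strictly less than m, written in polar coordinates as g(yz) = Σ_{j=0}^{2^m-2} Σ_{k=0}^{2^m} g_{j,k} y^j z^k for y ∈ F_{2^m}^*, z ∈ U. If g vanishes on Δ × U for a set Δ ⊆ F_{2^m}^* of 2^{m-1} consecutive powers of a primitive element β of F_{2^m}, then g_{j,k} = 0 for all j, k; i.e., g vanishes on all of F_{2^n}^*. -/

import Mathlib

private def wt (i : ℕ) : ℕ := (Nat.digits 2 i).count 1

private lemma wt_add_pow_mul {m : ℕ} (a b : ℕ) (ha : a < 2^m) :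
    wt (a + 2^m * b) = wt a + wt b := by
  rcases Nat.eq_zero_or_pos b with rfl | hb
  · simp [wt]
  · have hlen : (Nat.digits 2 a).length ≤ m :=
      by
      rcases Nat.eq_zero_or_pos a with rfl | hap
      · simp
      · rw [Nat.digits_len 2 a one_lt_two (by omega)]
        have := Nat.log_lt_of_lt_pow (by omega : a ≠ 0) ha
        omega
    have hk : (Nat.digits 2 a).length + (m - (Nat.digits 2 a).length) = m := by omega
    have := Nat.digits_append_zeroes_append_digits
      (b := 2) (k := m - (Nat.digits 2 a).length) (m := b) (n := a) one_lt_two hb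
    rw [hk] at this
    unfold wt
    rw [← this]
    simp [List.count_append, List.count_replicate]

private lemma wt_two_pow_sub_one (m : ℕ) : wt (2^m - 1) = m := by
  induction m with
  | zero => simp [wt]
  | succ m ih =>
    have h : 2^(m+1) - 1 = 1 + 2 * (2^m - 1) := by
      have : 1 ≤ 2^m := Nat.one_le_two_pow
      omega
    unfold wt
    rw [h, Nat.digits_add 2 one_lt_two 1 (2^m - 1) one_lt_two (Or.inl one_ne_zero)]
    rw [List.count_cons_self]
    unfold wt at ih
    omega

private lemma wt_compl {m : ℕ} (a : ℕ) (ha : a < 2^m) :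
    wt (2^m - 1 - a) + wt a = m := by
  induction m generalizing a with
  | zero => interval_cases a; simp [wt]
  | succ m ih =>
    rcases Nat.eq_zero_or_pos a with rfl | hapos
    · simpa [wt] using wt_two_pow_sub_one (m+1)
    rcases eq_or_ne a (2^(m+1) - 1) with rfl | hane
    · simpa [wt, wt_two_pow_sub_one] using (wt_two_pow_sub_one (m+1))
    · -- general case
      set r := a % 2 with hr
      set a' := a / 2 with ha'
      have h2m : 1 ≤ 2^m := Nat.one_le_two_pow
      have haa : a = 2 * a' + r := by omega
      have ha'lt : a' < 2^m := by
        have := Nat.pow_succ 2 m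
        omega
      have hx : 2^(m+1) - 1 - a = (1 - r) + 2 * (2^m - 1 - a') := by
        have := Nat.pow_succ 2 m
        omega
      have hr2 : r < 2 := Nat.mod_lt _ (by norm_num)
      have hcase : (1 - r) ≠ 0 ∨ (2^m - 1 - a') ≠ 0 := by
        rcases Nat.eq_zero_or_pos r with hr0 | hr1
        · left; omega
        · right
          intro h0
          apply hane
          have := Nat.pow_succ 2 m
          omega
      have hacase : r ≠ 0 ∨ a' ≠ 0 := by omega
      have e1 : wt (2^(m+1) - 1 - a) = (if (1-r) = 1 then 1 else 0) + wt (2^m - 1 - a') := by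
        unfold wt
        rw [hx, Nat.digits_add 2 one_lt_two (1-r) (2^m - 1 - a') (by omega) hcase]
        simp [List.count_cons]
        omega
      have e2 : wt a = (if r = 1 then 1 else 0) + wt a' := by
        unfold wt
        conv_lhs => rw [haa]
        rw [add_comm (2*a') r, Nat.digits_add 2 one_lt_two r a' hr2 hacase]
        simp [List.count_cons]
        omega
      have := ih a' ha'lt
      rw [e1, e2]
      have hr01 : r = 0 ∨ r = 1 := by omega
      rcases hr01 with h | h <;> simp [h] <;> omega

private lemma card_residue_wt_le (m ρ : ℕ) (hm : 0 < m) :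
    ((Finset.range (2^(2*m))).filter
      (fun i => i % (2^m+1) = ρ ∧ wt i < m)).card ≤ 2^(m-1) := by
  set q := 2^m with hqdef
  have hq2 : 2 ≤ q := by
    have : 2^1 ≤ 2^m := Nat.pow_le_pow_right (by norm_num) hm
    simpa using this
  have hqq : 2^(2*m) = q * q := by rw [two_mul, pow_add]
  set n := q + 1 with hndef
  haveI : NeZero n := ⟨by omega⟩
  have hqcast : (q : ZMod n) = -1 := by
    have h0 : ((n : ℕ) : ZMod n) = 0 := ZMod.natCast_self n
    have : ((q : ℕ) : ZMod n) + 1 = 0 := by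
      rw [hndef] at h0; push_cast at h0; linear_combination h0
    linear_combination this
  set f : ℕ → ℕ := fun i => (q - 1 - i % q) * q + (q - 1 - i / q) with hf
  set A := (Finset.range (2^(2*m))).filter (fun i => i % n = ρ ∧ wt i < m) with hA
  set B := (Finset.range (2^(2*m))).filter (fun i => i % n = ρ ∧ m < wt i) with hB
  set C := (Finset.range (2^(2*m))).filter (fun i => i % n = ρ) with hC
  have hdec : ∀ i, i < q*q → ∃ a b, a < q ∧ b < q ∧ i = a + q*b ∧ i % q = a ∧ i / q = b := by
    intro i hi
    refine ⟨i % q, i / q, Nat.mod_lt _ (by omega), Nat.div_lt_of_lt_mul hi,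
      (Nat.mod_add_div i q).symm, rfl, rfl⟩
  have hfval : ∀ i a b, i % q = a → i / q = b → f i = (q - 1 - a) * q + (q - 1 - b) := by
    intro i a b h1 h2; rw [hf]; simp only [h1, h2]
  have hfi_lt : ∀ a b, a < q → b < q → (q - 1 - a) * q + (q - 1 - b) < q * q := by
    intro a b ha hb
    have h3 : (q - 1 - a) * q ≤ (q - 1) * q := Nat.mul_le_mul_right q (Nat.sub_le _ _)
    have h4 : (q - 1) * q + q = q * q := by
      have h5 : (q - 1) + 1 = q := by omega
      calc (q - 1) * q + q = ((q - 1) + 1) * q := by ring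
        _ = q * q := by rw [h5]
    omega
  have hABmem : ∀ i, (i ∈ A ↔ i < q*q ∧ i % n = ρ ∧ wt i < m) := by
    intro i; rw [hA, Finset.mem_filter, Finset.mem_range, hqq]
  have hBmem : ∀ i, (i ∈ B ↔ i < q*q ∧ i % n = ρ ∧ m < wt i) := by
    intro i; rw [hB, Finset.mem_filter, Finset.mem_range, hqq]
  -- weight of f i
  have hwt : ∀ i a b, a < q → b < q → i = a + q*b → i % q = a → i / q = b →
      wt (f i) + wt i = 2 * m := by
    intro i a b ha hb hieq h1 h2
    have e1 : wt i = wt a + wt b := by rw [hieq]; exact wt_add_pow_mul _ _ ha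
    have e2 : wt (f i) = wt (q - 1 - b) + wt (q - 1 - a) := by
      rw [hfval i a b h1 h2, add_comm ((q-1-a)*q) _]
      rw [show (q-1-a)*q = q*(q-1-a) by ring]
      exact wt_add_pow_mul _ _ (by omega)
    have c1 := wt_compl (m := m) a ha
    have c2 := wt_compl (m := m) b hb
    rw [← hqdef] at c1 c2
    omega
  -- congruence of f i
  have hfmod : ∀ i a b, a < q → b < q → i = a + q*b → i % q = a → i / q = b →
      f i % n = i % n := by
    intro i a b ha hb hieq h1 h2
    have key : f i + (a * q + b) = (q - 1) * q + (q - 1) := by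
      rw [hfval i a b h1 h2]
      have l1 : (q - 1 - a) + a = q - 1 := by omega
      have l2 : (q - 1 - b) + b = q - 1 := by omega
      calc (q - 1 - a) * q + (q - 1 - b) + (a * q + b)
          = ((q - 1 - a) + a) * q + ((q - 1 - b) + b) := by ring
        _ = (q - 1) * q + (q - 1) := by rw [l1, l2]
    have kc := congrArg (fun t : ℕ => (t : ZMod n)) key
    have hieqc := congrArg (fun t : ℕ => (t : ZMod n)) hieq
    push_cast [Nat.cast_sub (by omega : 1 ≤ q)] at kc hieqc
    rw [hqcast] at kc
    have : ((f i : ℕ) : ZMod n) = ((i : ℕ) : ZMod n) := by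
      rw [hieqc, hqcast]; linear_combination kc
    exact (ZMod.natCast_eq_natCast_iff' _ _ _).mp this
  have hAB : ∀ i ∈ A, f i ∈ B := by
    intro i hi
    rw [hABmem] at hi
    obtain ⟨hilt, hiρ, hiwt⟩ := hi
    obtain ⟨a, b, ha, hb, hieq, h1, h2⟩ := hdec i hilt
    have hwti := hwt i a b ha hb hieq h1 h2
    rw [hBmem]
    refine ⟨by rw [hfval i a b h1 h2]; exact hfi_lt a b ha hb, ?_, by omega⟩
    rw [hfmod i a b ha hb hieq h1 h2]; exact hiρ
  have hfinj : Set.InjOn f A := by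
    intro i hi j hj hij
    rw [Finset.mem_coe, hABmem] at hi hj
    obtain ⟨a, b, ha, hb, hieq, h1, h2⟩ := hdec i hi.1
    obtain ⟨a', b', ha', hb', hjeq, h1', h2'⟩ := hdec j hj.1
    rw [hfval i a b h1 h2, hfval j a' b' h1' h2'] at hij
    have recov : ∀ x y : ℕ, x < q → y < q → ((q - 1 - x) * q + (q - 1 - y)) / q = q - 1 - x
        ∧ ((q - 1 - x) * q + (q - 1 - y)) % q = q - 1 - y := by
      intro x y hx hy
      constructor
      · rw [add_comm, Nat.add_mul_div_right _ _ (by omega : 0 < q),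
          Nat.div_eq_of_lt (by omega), zero_add]
      · rw [add_comm, Nat.add_mul_mod_self_right, Nat.mod_eq_of_lt (by omega)]
    have e1 : q - 1 - a = q - 1 - a' := by
      have := (recov a b ha hb).1
      have := (recov a' b' ha' hb').1
      rw [← this, ← hij]
      omega
    have e2 : q - 1 - b = q - 1 - b' := by
      have := (recov a b ha hb).2
      have := (recov a' b' ha' hb').2
      rw [← this, ← hij]
      omega
    have haa' : a = a' := by omega
    have hbb' : b = b' := by omega
    rw [hieq, hjeq, haa', hbb']
  -- cardinality of C
  have hCcard : C.card ≤ q := by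
    have hsub : ∀ i ∈ C, i / n ∈ Finset.range q := by
      intro i hi
      rw [hC, Finset.mem_filter, Finset.mem_range, hqq] at hi
      rw [Finset.mem_range]
      apply Nat.div_lt_of_lt_mul
      calc i < q * q := hi.1
        _ ≤ n * q := Nat.mul_le_mul_right q (by omega)
    have hinj : Set.InjOn (· / n) C := by
      intro i hi j hj hij
      rw [Finset.mem_coe, hC, Finset.mem_filter] at hi hj
      have e1 : i = n * (i / n) + i % n := (Nat.div_add_mod i n).symm
      have e2 : j = n * (j / n) + j % n := (Nat.div_add_mod j n).symm
      have hij' : i / n = j / n := hij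
      rw [e1, e2, hij', hi.2, hj.2]
    exact le_trans (Finset.card_le_card_of_injOn _ hsub hinj) (by simp)
  -- assemble
  have hABdisj : Disjoint A B := by
    rw [Finset.disjoint_left]
    intro i hi hib
    rw [hABmem] at hi
    rw [hBmem] at hib
    omega
  have hcardAB : A.card ≤ B.card := Finset.card_le_card_of_injOn f hAB hfinj
  have hunion : A.card + B.card ≤ q := by
    rw [← Finset.card_union_of_disjoint hABdisj]
    refine le_trans (Finset.card_le_card ?_) hCcard
    intro i hi
    rw [Finset.mem_union, hABmem, hBmem] at hi
    rw [hC, Finset.mem_filter, Finset.mem_range, hqq]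
    rcases hi with h | h <;> exact ⟨h.1, h.2.1⟩
  have hqhalf : q = 2 * 2^(m-1) := by
    rw [hqdef, ← pow_succ']
    congr 1
    omega
  omega

/-- The algebraic degree of a Boolean function on `𝔽_{2^n}` given by its univariate
representation `p` (a polynomial of degree at most `2^n - 1`): the maximum binary
weight of an exponent occurring in `p`. -/
def algDeg {F : Type*} [Field F] (p : Polynomial F) : ℕ :=
  p.support.sup fun i => (Nat.digits 2 i).count 1

private lemma vand_aux {F : Type*} [Field F] (S : Finset ℕ) (x c : ℕ → F) (s r : ℕ)
    (hcard : S.card ≤ r)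
    (hinj : Set.InjOn x S) (hx0 : ∀ i ∈ S, x i ≠ 0)
    (heq : ∀ t, t < r → ∑ i ∈ S, c i * x i ^ (s + t) = 0) :
    ∀ i ∈ S, c i = 0 := by
  classical
  let e := S.equivFin
  have key : (fun j : Fin S.card => c (e.symm j : ℕ) * x (e.symm j : ℕ) ^ s) = 0 := by
    apply Matrix.eq_zero_of_forall_pow_sum_mul_pow_eq_zero
      (f := fun j : Fin S.card => x (e.symm j : ℕ))
    · intro j j' hjj'
      have h1 : ((e.symm j : ℕ) : ℕ) = (e.symm j' : ℕ) :=
        hinj (Finset.mem_coe.mpr (e.symm j).2) (Finset.mem_coe.mpr (e.symm j').2) hjj'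
      have h2 : e.symm j = e.symm j' := Subtype.ext h1
      exact e.symm.injective h2
    · intro t
      have ht : (t : ℕ) < r := lt_of_lt_of_le t.2 hcard
      have := heq t ht
      rw [← this]
      have hsum : ∑ j : Fin S.card,
          (c (e.symm j : ℕ) * x (e.symm j : ℕ) ^ s) * x (e.symm j : ℕ) ^ (t : ℕ)
          = ∑ i : S, (c (i : ℕ) * x (i : ℕ) ^ s) * x (i : ℕ) ^ (t : ℕ) :=
        Equiv.sum_comp e.symm (fun i : S => (c (i : ℕ) * x (i : ℕ) ^ s) * x (i : ℕ) ^ (t : ℕ))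
      rw [hsum, Finset.sum_coe_sort S (fun i => (c i * x i ^ s) * x i ^ (t : ℕ))]
      apply Finset.sum_congr rfl
      intro i _
      rw [pow_add]
      ring
  intro i hi
  have h0 := congrFun key (e ⟨i, hi⟩)
  simp only [Equiv.symm_apply_apply, Pi.zero_apply] at h0
  have hxs : x i ^ s ≠ 0 := pow_ne_zero _ (hx0 i hi)
  exact (mul_eq_zero.mp h0).resolve_right hxs
/-- Let `n = 2m` and let `g` be a Boolean function on `𝔽_{2^n}` (given by its
univariate representation `p`, of degree `< 2^n`, with values in `{0,1}`) of algebraic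
degree strictly less than `m`. If `g` vanishes on `Δ × U`, where
`Δ = {β^s, β^(s+1), ..., β^(s+2^(m-1)-1)}` is a set of `2^(m-1)` consecutive powers of
a primitive element `β` of `𝔽_{2^m}` and `U` is the subgroup of `𝔽_{2^n}^*` of order
`2^m + 1`, then `g` vanishes on all of `𝔽_{2^n}^*`. -/
theorem stmt_19 (m : ℕ) (hm : 0 < m) (F : Type*) [Field F] [Fintype F]
    (hF : Fintype.card F = 2^(2*m))
    (β : F) (hβ : orderOf β = 2^m - 1)
    (p : Polynomial F) (hdeg : p.natDegree < 2^(2*m))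
    (hbool : ∀ x : F, p.eval x * p.eval x = p.eval x)
    (halg : algDeg p < m)
    (s : ℕ)
    (hvan : ∀ i : ℕ, i < 2^(m-1) → ∀ z : F, z^(2^m + 1) = 1 →
      p.eval (β^(s + i) * z) = 0) :
    ∀ x : F, x ≠ 0 → p.eval x = 0 := by
  classical
  set q := 2^m with hqdef
  have hq2 : 2 ≤ q := by
    have : 2^1 ≤ 2^m := Nat.pow_le_pow_right (by norm_num) hm
    simpa using this
  have hqq : 2^(2*m) = q * q := by rw [two_mul, pow_add]
  have hqq1 : (q - 1) * (q + 1) = q * q - 1 := by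
    have h1 : 1 ≤ q := by omega
    have h2 : 1 ≤ q * q := Nat.one_le_iff_ne_zero.mpr (by positivity)
    zify [h1, h2]; ring
  -- characteristic 2
  have hchar2 : (2 : F) = 0 := by
    haveI : CharP F (ringChar F) := ringChar.charP F
    obtain ⟨n, hprime, hcard⟩ := FiniteField.card F (ringChar F)
    have hdvd : ringChar F ∣ 2^(2*m) := by
      rw [← hF, hcard]
      exact dvd_pow_self _ (by exact_mod_cast n.pos.ne')
    have := (Nat.Prime.dvd_of_dvd_pow hprime hdvd)
    have h2 : ringChar F = 2 := (Nat.prime_dvd_prime_iff_eq hprime Nat.prime_two).mp this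
    have h3 : ((2:ℕ):F) = 0 := by rw [← h2]; exact CharP.cast_eq_zero F (ringChar F)
    exact_mod_cast h3
  have hqF : ((q : ℕ) : F) = 0 := by
    rw [hqdef]
    push_cast
    rw [hchar2]
    exact zero_pow (by omega)
  -- β is nonzero
  have hβne : β ≠ 0 := by
    intro h0
    rw [h0] at hβ
    have : (0 : F) ^ (q - 1) = 1 := by
      rw [← hβ]; exact pow_orderOf_eq_one 0
    rw [zero_pow (by omega : q - 1 ≠ 0)] at this
    exact zero_ne_one this
  set βu : Fˣ := Units.mk0 β hβne with hβu
  have hβuord : orderOf βu = q - 1 := by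
    rw [← orderOf_units]; exact hβ
  -- the element w of order q+1
  obtain ⟨g, hg⟩ := IsCyclic.exists_generator (α := Fˣ)
  have hgord : orderOf g = q * q - 1 := by
    rw [orderOf_eq_card_of_forall_mem_zpowers hg, Nat.card_eq_fintype_card,
      Fintype.card_units, hF, hqq]
  have hword : orderOf ((g ^ (q - 1) : Fˣ) : F) = q + 1 := by
    rw [orderOf_units, orderOf_pow, hgord]
    rw [Nat.gcd_eq_right (by rw [← hqq1]; exact Dvd.intro _ rfl), ← hqq1,
      Nat.mul_div_cancel_left _ (by omega : 0 < q - 1)]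
  set w : F := ((g ^ (q - 1) : Fˣ) : F) with hw
  have hw1 : w ^ (q + 1) = 1 := by rw [← hword]; exact pow_orderOf_eq_one w
  -- geometric sums
  have hgeom : ∀ v : F, v ^ (q+1) = 1 →
      ∑ a ∈ Finset.range (q+1), v ^ a = if v = 1 then 1 else 0 := by
    intro v hv
    by_cases h1 : v = 1
    · rw [if_pos h1, h1]
      simp only [one_pow, Finset.sum_const, Finset.card_range, nsmul_eq_mul, mul_one]
      push_cast
      rw [hqF]
      ring
    · rw [if_neg h1, geom_sum_eq h1, hv, sub_self, zero_div]
  -- coprimality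
  have hcop : Nat.Coprime (q - 1) (q + 1) := by
    have h2q : 2 ∣ q := by rw [hqdef]; exact dvd_pow_self 2 hm.ne'
    have hd2 : Nat.gcd (q - 1) (q + 1) ∣ 2 := by
      have := Nat.dvd_sub (Nat.gcd_dvd_right (q-1) (q+1)) (Nat.gcd_dvd_left (q-1) (q+1))
      rwa [show (q + 1) - (q - 1) = 2 by omega] at this
    have hd1 : Nat.gcd (q - 1) (q + 1) ∣ q - 1 := Nat.gcd_dvd_left _ _
    rcases (Nat.dvd_prime Nat.prime_two).mp hd2 with h | h
    · exact h
    · exfalso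
      rw [h] at hd1
      omega
  -- weight bound on support elements
  have hwtsupp : ∀ i ∈ p.support, wt i < m := by
    intro i hi
    have : wt i ≤ algDeg p := Finset.le_sup (f := fun i => (Nat.digits 2 i).count 1) hi
    omega
  have hsupplt : ∀ i ∈ p.support, i < q * q - 1 := by
    intro i hi
    have h1 : i ≤ p.natDegree := Polynomial.le_natDegree_of_mem_supp i hi
    have h2 : i ≠ q * q - 1 := by
      intro h
      have := hwtsupp i hi
      rw [h, ← hqq, wt_two_pow_sub_one] at this
      omega
    rw [hqq] at hdeg
    omega
  have heval : ∀ x : F, p.eval x = ∑ i ∈ p.support, p.coeff i * x ^ i := by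
    intro x
    rw [Polynomial.eval_eq_sum, Polynomial.sum_def]
  -- main coefficient argument
  have hcoeff : ∀ i₀, p.coeff i₀ = 0 := by
    intro i₀
    by_cases hmem : i₀ ∈ p.support
    swap
    · exact Polynomial.notMem_support_iff.mp hmem
    set ρ := i₀ % (q + 1) with hρ
    have hρlt : ρ < q + 1 := Nat.mod_lt _ (by omega)
    set k' := (q + 1) - ρ with hk'
    set S := p.support.filter (fun i => i % (q + 1) = ρ) with hS
    haveI : NeZero (q + 1) := ⟨by omega⟩
    have hcond : ∀ i : ℕ, (w ^ (k' + i) = 1 ↔ i % (q + 1) = ρ) := by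
      intro i
      rw [← orderOf_dvd_iff_pow_eq_one, hword]
      rw [← ZMod.natCast_eq_zero_iff]
      push_cast [hk', Nat.cast_sub (by omega : ρ ≤ q + 1)]
      have h0 : (((q+1) : ℕ) : ZMod (q+1)) = 0 := ZMod.natCast_self _
      push_cast at h0
      constructor
      · intro h
        have : ((i : ℕ) : ZMod (q+1)) = ((ρ : ℕ) : ZMod (q+1)) := by linear_combination h - h0
        have := (ZMod.natCast_eq_natCast_iff' _ _ _).mp this
        rwa [Nat.mod_eq_of_lt hρlt] at this
      · intro h
        have : ((i : ℕ) : ZMod (q+1)) = ((ρ : ℕ) : ZMod (q+1)) := by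
          rw [ZMod.natCast_eq_natCast_iff']
          rw [h, Nat.mod_eq_of_lt hρlt]
        linear_combination this + h0
    -- the key identity
    have hid : ∀ y : F, ∑ i ∈ S, p.coeff i * y ^ i
        = ∑ a ∈ Finset.range (q+1), w ^ (a * k') * p.eval (y * w ^ a) := by
      intro y
      symm
      calc ∑ a ∈ Finset.range (q+1), w ^ (a * k') * p.eval (y * w ^ a)
          = ∑ a ∈ Finset.range (q+1), ∑ i ∈ p.support,
              p.coeff i * y ^ i * (w ^ (k' + i)) ^ a := by
            apply Finset.sum_congr rfl
            intro a _
            rw [heval, Finset.mul_sum]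
            apply Finset.sum_congr rfl
            intro i _
            rw [mul_pow, ← pow_mul w a i, ← pow_mul w (k' + i) a,
              show (k' + i) * a = a * k' + a * i by ring, pow_add]
            ring
        _ = ∑ i ∈ p.support, ∑ a ∈ Finset.range (q+1),
              p.coeff i * y ^ i * (w ^ (k' + i)) ^ a := Finset.sum_comm
        _ = ∑ i ∈ p.support, p.coeff i * y ^ i * (if w ^ (k' + i) = 1 then 1 else 0) := by
            apply Finset.sum_congr rfl
            intro i _
            rw [← Finset.mul_sum, hgeom (w ^ (k' + i)) (by rw [pow_right_comm, hw1, one_pow])]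
        _ = ∑ i ∈ p.support, (if i % (q + 1) = ρ then p.coeff i * y ^ i else 0) := by
            apply Finset.sum_congr rfl
            intro i _
            by_cases h : i % (q + 1) = ρ
            · rw [if_pos h, if_pos ((hcond i).mpr h), mul_one]
            · rw [if_neg h, if_neg (fun h1 => h ((hcond i).mp h1)), mul_zero]
        _ = ∑ i ∈ S, p.coeff i * y ^ i := (Finset.sum_filter _ _).symm
    -- cardinality bound
    have hcard : S.card ≤ 2^(m-1) := by
      refine le_trans (Finset.card_le_card ?_) (card_residue_wt_le m ρ hm)
      intro i hi
      rw [hS, Finset.mem_filter] at hi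
      rw [Finset.mem_filter, Finset.mem_range]
      have h1 := hsupplt i hi.1
      have h2 := hwtsupp i hi.1
      exact ⟨by rw [hqq]; omega, hi.2, h2⟩
    -- injectivity of i ↦ β^i on S
    have hinj : Set.InjOn (fun i => β ^ i) S := by
      intro i hi j hj hij
      rw [Finset.mem_coe, hS, Finset.mem_filter] at hi hj
      have hu : βu ^ i = βu ^ j := by
        apply Units.ext
        rw [Units.val_pow_eq_pow_val, Units.val_pow_eq_pow_val]
        exact hij
      have h1 : i ≡ j [MOD q - 1] := by
        have := pow_eq_pow_iff_modEq.mp hu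
        rwa [hβuord] at this
      have h2 : i ≡ j [MOD q + 1] := by
        unfold Nat.ModEq
        rw [hi.2, hj.2]
      have h3 : i ≡ j [MOD q * q - 1] := by
        rw [← hqq1]
        exact (Nat.modEq_and_modEq_iff_modEq_mul hcop).mp ⟨h1, h2⟩
      have h4 := hsupplt i hi.1
      have h5 := hsupplt j hj.1
      unfold Nat.ModEq at h3
      rwa [Nat.mod_eq_of_lt h4, Nat.mod_eq_of_lt h5] at h3
    -- the evaluation equations
    have heqs : ∀ t, t < 2^(m-1) → ∑ i ∈ S, p.coeff i * (β ^ i) ^ (s + t) = 0 := by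
      intro t ht
      have h1 : ∑ i ∈ S, p.coeff i * (β ^ (s + t)) ^ i = 0 := by
        rw [hid (β ^ (s + t))]
        apply Finset.sum_eq_zero
        intro a _
        rw [hvan t ht (w ^ a) (by rw [pow_right_comm, hw1, one_pow]), mul_zero]
      rw [← h1]
      apply Finset.sum_congr rfl
      intro i _
      rw [pow_right_comm]
    have := vand_aux S (fun i => β ^ i) (fun i => p.coeff i) s (2^(m-1)) hcard hinj
      (fun i _ => pow_ne_zero _ hβne) heqs
    exact this i₀ (by rw [hS, Finset.mem_filter]; exact ⟨hmem, rfl⟩)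
  intro x _
  have hp0 : p = 0 := Polynomial.ext (fun i => by rw [hcoeff i, Polynomial.coeff_zero])
  rw [hp0, Polynomial.eval_zero]
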